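/- arXiv:2401.13377 — 2 statements merged into one kernel-verified Lean document; each statement's English description precedes it below -/
import Mathlib

section
/- Let (u, ρ) be a smooth solution of the prescribed curvature flow on [0, T) for smooth positive data f (on the closed unit disc) and j (on the unit circle), and suppose α₁, β₁ are constants with α(t) ≤ α₁ and β(t) ≤ β₁ for all t < T. Then for every t < T there holds sup_{closure B} u(·, t) ≤ sup_{closure B} u(·, 0) + t ( α₁ ‖f‖_{L∞} + β₁ ‖j‖_{L∞} ). -/
open MeasureTheory Metric Set Filter
open scoped Real Topology ENNReal

noncomputable section

/-- The closed unit disc in `ℂ ≅ ℝ²`. -/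
def cdisc : Set ℂ := Metric.closedBall 0 1

/-- The open unit disc `B`. -/
def odisc : Set ℂ := Metric.ball 0 1

/-- The unit circle `∂B`. -/
def bdry : Set ℂ := Metric.sphere 0 1

/-- The boundary point with angle `θ`. -/
def bpt (θ : ℝ) : ℂ := Complex.exp ((θ : ℂ) * Complex.I)

/-- Boundary integral with respect to arclength `ds₀`. -/
def circInt (φ : ℂ → ℝ) : ℝ := ∫ θ in (0:ℝ)..(2 * Real.pi), φ (bpt θ)

/-- Integral over the open unit disc with respect to Lebesgue measure. -/
def ballInt (φ : ℂ → ℝ) : ℝ := ∫ z in odisc, φ z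

/-- Outward normal derivative `∂w/∂ν₀(z) = z·∇w(z)` for `z ∈ ∂B`. -/
def nder (w : ℂ → ℝ) (z : ℂ) : ℝ := fderivWithin ℝ w cdisc z z

/-- The Euclidean Laplacian, computed with derivatives within the closed disc. -/
def lapW (w : ℂ → ℝ) (z : ℂ) : ℝ :=
  fderivWithin ℝ (fun x => fderivWithin ℝ w cdisc x 1) cdisc z 1 +
  fderivWithin ℝ (fun x => fderivWithin ℝ w cdisc x Complex.I) cdisc z Complex.I

/-- The coefficient `α(t) = 2ρ(t)/∫_B f e^{2u(·,t)} dz`. -/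
def alphaC (f : ℂ → ℝ) (u : ℂ → ℝ → ℝ) (ρ : ℝ → ℝ) (t : ℝ) : ℝ :=
  2 * ρ t / ballInt fun z => f z * Real.exp (2 * u z t)

/-- The coefficient `β(t) = 2(π − ρ(t))/∫_{∂B} j e^{u(·,t)} ds₀`. -/
def betaC (j : ℂ → ℝ) (u : ℂ → ℝ → ℝ) (ρ : ℝ → ℝ) (t : ℝ) : ℝ :=
  2 * (Real.pi - ρ t) / circInt fun z => j z * Real.exp (u z t)

/-- The time domain `[0, T)` (with `T ∈ (0, ∞]`). -/
def flowDom (T : ℝ≥0∞) : Set ℝ := {t : ℝ | 0 ≤ t ∧ ENNReal.ofReal t < T}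

/-- `(u, ρ)` is a smooth solution of the prescribed curvature flow on `[0, T)`:
`∂u/∂t = α f + e^{−2u} Δu` in `B`, `∂u/∂t = β j − e^{−u}(∂u/∂ν₀ + 1)` on `∂B`,
and `dρ/dt = log (β²/α)`, with `u` smooth on `closure B × [0,T)` and `ρ` C¹ with
values in `(0, π)`. -/
def IsFlow (f j : ℂ → ℝ) (T : ℝ≥0∞) (u : ℂ → ℝ → ℝ) (ρ : ℝ → ℝ) : Prop :=
  ContDiffOn ℝ (⊤ : ℕ∞) (fun p : ℂ × ℝ => u p.1 p.2) (cdisc ×ˢ flowDom T) ∧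
  ContDiffOn ℝ 1 ρ (flowDom T) ∧
  (∀ t ∈ flowDom T, ρ t ∈ Set.Ioo 0 Real.pi) ∧
  (∀ t ∈ flowDom T, 0 < t → ∀ z ∈ odisc,
    deriv (u z) t = alphaC f u ρ t * f z + Real.exp (-(2 * u z t)) * lapW (fun w => u w t) z) ∧
  (∀ t ∈ flowDom T, 0 < t → ∀ z ∈ bdry,
    deriv (u z) t = betaC j u ρ t * j z - Real.exp (-(u z t)) * (nder (fun w => u w t) z + 1)) ∧
  (∀ t ∈ flowDom T, 0 < t →
    deriv ρ t = Real.log (betaC j u ρ t ^ 2 / alphaC f u ρ t))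

/-! ### Auxiliary lemmas -/

lemma osub : odisc ⊆ cdisc := ball_subset_closedBall

lemma cnhds {x : ℂ} (hx : x ∈ odisc) : cdisc ∈ 𝓝 x :=
  _root_.mem_nhds_iff.mpr ⟨odisc, osub, isOpen_ball, hx⟩

lemma second_deriv_nonpos_of_isLocalMax {g : ℝ → ℝ} (hg : ContDiffAt ℝ 2 g 0)
    (hmax : IsLocalMax g 0) : deriv (deriv g) 0 ≤ 0 := by
  by_contra hc
  push_neg at hc
  have hd0 : deriv g 0 = 0 := hmax.deriv_eq_zero
  have hdg : ContDiffAt ℝ 1 (deriv g) 0 := by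
    have := hg.fderiv_right (m := 1) le_rfl
    have h2 : ContDiffAt ℝ 1 (fun x => fderiv ℝ g x 1) 0 := this.clm_apply contDiffAt_const
    have : (fun x => fderiv ℝ g x 1) = deriv g := rfl
    rwa [this] at h2
  have hder : HasDerivAt (deriv g) (deriv (deriv g) 0) 0 :=
    (hdg.differentiableAt one_ne_zero).hasDerivAt
  have hslope := hasDerivAt_iff_tendsto_slope.mp hder
  have hev : ∀ᶠ x in 𝓝[≠] (0:ℝ), 0 < slope (deriv g) 0 x :=
    hslope.eventually (eventually_gt_nhds hc)
  have hle : 𝓝[>] (0:ℝ) ≤ 𝓝[≠] (0:ℝ) := nhdsWithin_mono _ (fun x hx => ne_of_gt hx)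
  have hev2 : ∀ᶠ x in 𝓝[>] (0:ℝ), 0 < deriv g x := by
    filter_upwards [hev.filter_mono hle, self_mem_nhdsWithin] with x hx hx'
    have : slope (deriv g) 0 x = deriv g x / x := by
      simp [slope_def_field, hd0, div_eq_inv_mul]
    rw [this] at hx
    exact (div_pos_iff.mp hx).resolve_right (fun h => absurd h.2 (not_lt.mpr (le_of_lt hx'))) |>.1
  obtain ⟨U, hU, hgU⟩ := hg.contDiffOn (le_refl 2) (by simp)
  obtain ⟨δ₁, hδ₁, hball⟩ := Metric.mem_nhds_iff.mp hU
  have hmax' : ∀ᶠ x in 𝓝 (0:ℝ), g x ≤ g 0 := hmax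
  obtain ⟨δ₂, hδ₂, hball2⟩ := Metric.mem_nhds_iff.mp hmax'
  obtain ⟨δ₃, hδ₃, hIoc⟩ := mem_nhdsGT_iff_exists_Ioc_subset.mp hev2
  set δ := min (min (δ₁/2) (δ₂/2)) δ₃ with hδdef
  have hδpos : 0 < δ := lt_min (lt_min (by linarith) (by linarith)) hδ₃
  have hIccU : Icc (0:ℝ) δ ⊆ U := by
    intro x hx
    apply hball
    simp only [Metric.mem_ball, Real.dist_eq, abs_sub_comm, sub_zero]
    rw [abs_of_nonneg hx.1]
    calc x ≤ δ := hx.2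
      _ ≤ δ₁/2 := le_trans (min_le_left _ _) (min_le_left _ _)
      _ < δ₁ := by linarith
  have hcont : ContinuousOn g (Icc 0 δ) := (hgU.continuousOn).mono hIccU
  have hmono : StrictMonoOn g (Icc 0 δ) := by
    apply strictMonoOn_of_deriv_pos (convex_Icc _ _) hcont
    intro x hx
    rw [interior_Icc] at hx
    exact hIoc ⟨hx.1, le_trans (le_of_lt hx.2) (min_le_right _ _)⟩
  have h1 : g 0 < g δ := hmono ⟨le_refl _, le_of_lt hδpos⟩ ⟨le_of_lt hδpos, le_refl _⟩ hδpos
  have h2 : g δ ≤ g 0 := by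
    apply hball2
    simp only [Metric.mem_ball, Real.dist_eq, sub_zero]
    rw [abs_of_pos hδpos]
    calc δ ≤ δ₂/2 := le_trans (min_le_left _ _) (min_le_right _ _)
      _ < δ₂ := by linarith
  linarith

lemma dir2_nonpos {v : ℂ → ℝ} {z₀ : ℂ} (hv : ContDiffAt ℝ 2 v z₀)
    (hmax : IsLocalMax v z₀) (e : ℂ) :
    fderiv ℝ (fun x => fderiv ℝ v x e) z₀ e ≤ 0 := by
  set L : ℝ → ℂ := fun r => z₀ + r • e with hL
  have hL0 : L 0 = z₀ := by simp [hL]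
  have hLd : ∀ r : ℝ, HasDerivAt L e r := by
    intro r
    simpa [hL] using ((hasDerivAt_id r).smul_const e).const_add z₀
  have hLc : Continuous L := by fun_prop
  set g : ℝ → ℝ := fun r => v (L r) with hgdef
  have hLcd : ContDiffAt ℝ 2 L 0 := ((contDiff_const.add (contDiff_id.smul contDiff_const)).contDiffAt)
  have hg2 : ContDiffAt ℝ 2 g 0 := ContDiffAt.comp 0 (hL0 ▸ hv) hLcd
  have hct : Tendsto L (𝓝 0) (𝓝 z₀) := by rw [← hL0]; exact hLc.continuousAt
  have hgmax : IsLocalMax g 0 := by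
    have h1 : IsMaxFilter v (𝓝 z₀) (L 0) := by rwa [hL0]
    exact h1.comp_tendsto hct
  obtain ⟨U, hU, hvU⟩ := hv.contDiffOn (m := 1) (by norm_num) (by simp)
  obtain ⟨V, hVU, hVopen, hzV⟩ := _root_.mem_nhds_iff.mp hU
  have hdiff : ∀ x ∈ V, DifferentiableAt ℝ v x := fun x hx =>
    ((hvU.differentiableOn one_ne_zero) x (hVU hx)).differentiableAt
      (Filter.mem_of_superset (hVopen.mem_nhds hx) hVU)
  have hpre : L ⁻¹' V ∈ 𝓝 (0:ℝ) := hLc.continuousAt.preimage_mem_nhds (by rw [hL0]; exact hVopen.mem_nhds hzV)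
  have ev : ∀ᶠ r in 𝓝 (0:ℝ), HasDerivAt g (fderiv ℝ v (L r) e) r := by
    filter_upwards [hpre] with r hr
    exact ((hdiff _ hr).hasFDerivAt).comp_hasDerivAt r (hLd r)
  have hderiv_eq : deriv g =ᶠ[𝓝 (0:ℝ)] fun r => fderiv ℝ v (L r) e := by
    filter_upwards [ev] with r hr using hr.deriv
  have key : deriv (deriv g) 0 = fderiv ℝ (fun x => fderiv ℝ v x e) z₀ e := by
    rw [hderiv_eq.deriv_eq]
    have hG : HasFDerivAt (fun x => fderiv ℝ v x e) (fderiv ℝ (fun x => fderiv ℝ v x e) z₀) z₀ := by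
      have h1 : ContDiffAt ℝ 1 (fderiv ℝ v) z₀ := hv.fderiv_right (m := 1) le_rfl
      exact ((h1.clm_apply contDiffAt_const).differentiableAt one_ne_zero).hasFDerivAt
    have h3 := ((hL0 ▸ hG).comp_hasDerivAt 0 (hLd 0)).deriv
    simp only [Function.comp_def] at h3
    rw [hL0] at h3
    exact h3
  rw [← key]
  exact second_deriv_nonpos_of_isLocalMax hg2 hgmax

lemma lapW_nonpos {v : ℂ → ℝ} {z₀ : ℂ} (hv : ContDiffOn ℝ (⊤ : ℕ∞) v cdisc)
    (hz : z₀ ∈ odisc) (hmax : IsMaxOn v cdisc z₀) : lapW v z₀ ≤ 0 := by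
  have hnbhd : cdisc ∈ 𝓝 z₀ := cnhds hz
  have hvAt : ContDiffAt ℝ 2 v z₀ := (hv.contDiffAt hnbhd).of_le (by
    rw [show ((2:WithTop ℕ∞)) = ((2:ℕ∞):WithTop ℕ∞) by norm_cast]
    exact WithTop.coe_le_coe.mpr le_top)
  have hlm : IsLocalMax v z₀ := hmax.isLocalMax hnbhd
  have key : ∀ e : ℂ, fderivWithin ℝ (fun x => fderivWithin ℝ v cdisc x e) cdisc z₀ e ≤ 0 := by
    intro e
    rw [fderivWithin_of_mem_nhds hnbhd]
    have heq : (fun x => fderivWithin ℝ v cdisc x e) =ᶠ[𝓝 z₀] fun x => fderiv ℝ v x e := by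
      filter_upwards [isOpen_ball.mem_nhds hz] with x hx
      rw [fderivWithin_of_mem_nhds (cnhds hx)]
    rw [heq.fderiv_eq]
    exact dir2_nonpos hvAt hlm e
  exact add_nonpos (key 1) (key Complex.I)

/-- Maximum principle upper bound along the flow:
`sup_B u(·,t) ≤ sup_B u(·,0) + t (α₁ ‖f‖_∞ + β₁ ‖j‖_∞)`. -/
theorem flow_sup_bound (f j : ℂ → ℝ)
    (hf : ContDiffOn ℝ (⊤ : ℕ∞) f cdisc) (hfpos : ∀ z ∈ cdisc, 0 < f z)
    (hj : ContDiffOn ℝ (⊤ : ℕ∞) j bdry) (hjpos : ∀ z ∈ bdry, 0 < j z)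
    (T : ℝ≥0∞) (hT : 0 < T) (u : ℂ → ℝ → ℝ) (ρ : ℝ → ℝ)
    (hflow : IsFlow f j T u ρ)
    (α₁ β₁ : ℝ)
    (hα : ∀ t ∈ flowDom T, alphaC f u ρ t ≤ α₁)
    (hβ : ∀ t ∈ flowDom T, betaC j u ρ t ≤ β₁) :
    ∀ t ∈ flowDom T, ∀ z ∈ cdisc,
      u z t ≤ (⨆ w : cdisc, u ↑w 0) +
        t * (α₁ * (⨆ w : cdisc, |f ↑w|) + β₁ * (⨆ w : bdry, |j ↑w|)) := by
  obtain ⟨hsm, hρC1, hρrange, hPDEi, hPDEb, hPDEρ⟩ := hflow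
  set S₀ := (⨆ w : cdisc, u ↑w 0) with hS₀def
  set Mf := (⨆ w : cdisc, |f ↑w|) with hMfdef
  set Mj := (⨆ w : bdry, |j ↑w|) with hMjdef
  have hcds : IsCompact cdisc := isCompact_closedBall 0 1
  have h0c : (0:ℂ) ∈ cdisc := mem_closedBall_self zero_le_one
  have hcne : cdisc.Nonempty := ⟨0, h0c⟩
  have hbsub : bdry ⊆ cdisc := sphere_subset_closedBall
  have h1b : (1:ℂ) ∈ bdry := by simp [bdry]
  have h0flow : (0:ℝ) ∈ flowDom T := ⟨le_refl 0, by simpa using hT⟩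
  have hIccsub : ∀ t ∈ flowDom T, Icc (0:ℝ) t ⊆ flowDom T := by
    intro t ht τ hτ
    exact ⟨hτ.1, lt_of_le_of_lt (ENNReal.ofReal_le_ofReal hτ.2) ht.2⟩
  have hucont : ContinuousOn (fun p : ℂ × ℝ => u p.1 p.2) (cdisc ×ˢ flowDom T) :=
    hsm.continuousOn
  have hucont_t : ∀ t ∈ flowDom T, ContinuousOn (fun z => u z t) cdisc := by
    intro t ht
    exact hucont.comp (Continuous.continuousOn (by fun_prop))
      (fun z hz => Set.mk_mem_prod hz ht)
  have huC_cdisc : ∀ t ∈ flowDom T, ContDiffOn ℝ (⊤ : ℕ∞) (fun z => u z t) cdisc := by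
    intro t ht
    exact hsm.comp ((contDiff_id.prodMk contDiff_const).contDiffOn)
      (fun z hz => Set.mk_mem_prod hz ht)
  -- sup bounds
  have himg : ∀ {g : ℂ → ℝ} {s : Set ℂ}, BddAbove (g '' s) →
      BddAbove (Set.range fun w : s => g ↑w) := by
    rintro g s ⟨b, hb⟩
    refine ⟨b, ?_⟩
    rintro x ⟨w, rfl⟩
    exact hb (Set.mem_image_of_mem g w.2)
  have hbddu0 : BddAbove (Set.range fun w : cdisc => u ↑w 0) :=
    himg (hcds.image_of_continuousOn (hucont_t 0 h0flow)).bddAbove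
  have hS₀le : ∀ z ∈ cdisc, u z 0 ≤ S₀ := fun z hz => le_ciSup hbddu0 ⟨z, hz⟩
  have hbddf : BddAbove (Set.range fun w : cdisc => |f ↑w|) :=
    himg (hcds.image_of_continuousOn (hf.continuousOn.abs)).bddAbove
  have hMfle : ∀ z ∈ cdisc, |f z| ≤ Mf := fun z hz => le_ciSup hbddf ⟨z, hz⟩
  have hbddj : BddAbove (Set.range fun w : bdry => |j ↑w|) :=
    himg ((isCompact_sphere 0 1).image_of_continuousOn (hj.continuousOn.abs)).bddAbove
  have hMjle : ∀ z ∈ bdry, |j z| ≤ Mj := fun z hz => le_ciSup hbddj ⟨z, hz⟩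
  have hMf0 : 0 ≤ Mf := le_trans (abs_nonneg _) (hMfle 0 h0c)
  have hMj0 : 0 ≤ Mj := le_trans (abs_nonneg _) (hMjle 1 h1b)
  have hρ0 := hρrange 0 h0flow
  -- α₁ is positive
  have hα₁pos : 0 < α₁ := by
    have hφc : ContinuousOn (fun z => f z * Real.exp (2 * u z 0)) cdisc :=
      hf.continuousOn.mul (Real.continuous_exp.comp_continuousOn
        (continuousOn_const.mul (hucont_t 0 h0flow)))
    obtain ⟨zm, hzm, hmin⟩ := hcds.exists_isMinOn hcne hφc
    have hmpos : 0 < f zm * Real.exp (2 * u zm 0) :=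
      mul_pos (hfpos zm hzm) (Real.exp_pos _)
    have hinteg : IntegrableOn (fun z => f z * Real.exp (2 * u z 0)) odisc volume :=
      (hφc.integrableOn_compact hcds).mono_set osub
    have hvol : 0 < (volume odisc).toReal := by
      refine ENNReal.toReal_pos (ne_of_gt (measure_ball_pos volume 0 one_pos)) ?_
      exact (measure_ball_lt_top).ne
    have hkey : f zm * Real.exp (2 * u zm 0) * (volume odisc).toReal
        ≤ ballInt (fun z => f z * Real.exp (2 * u z 0)) :=
      setIntegral_ge_of_const_le_real measurableSet_ball measure_ball_lt_top.ne
        (fun x hx => hmin (osub hx)) hinteg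
    have hint : 0 < ballInt (fun z => f z * Real.exp (2 * u z 0)) :=
      lt_of_lt_of_le (mul_pos hmpos hvol) hkey
    have := hα 0 h0flow
    rw [alphaC] at this
    exact lt_of_lt_of_le (div_pos (by linarith [hρ0.1]) hint) this
  -- β₁ is positive
  have hβ₁pos : 0 < β₁ := by
    have hbptmem : ∀ θ : ℝ, bpt θ ∈ bdry := by
      intro θ
      simp [bdry, bpt, Complex.norm_exp]
    have hbptc : Continuous bpt := by
      unfold bpt; fun_prop
    have hψc : Continuous fun θ : ℝ => j (bpt θ) * Real.exp (u (bpt θ) 0) := by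
      rw [← continuousOn_univ]
      apply ContinuousOn.mul
      · exact hj.continuousOn.comp hbptc.continuousOn (fun θ _ => hbptmem θ)
      · apply Real.continuous_exp.comp_continuousOn
        exact hucont.comp (Continuous.continuousOn (by fun_prop))
          (fun θ _ => Set.mk_mem_prod (hbsub (hbptmem θ)) h0flow)
    have hint : 0 < circInt (fun z => j z * Real.exp (u z 0)) := by
      rw [circInt]
      exact intervalIntegral.intervalIntegral_pos_of_pos_on
        (hψc.intervalIntegrable 0 (2 * Real.pi))
        (fun x _ => mul_pos (hjpos _ (hbptmem x)) (Real.exp_pos _)) (by positivity)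
    have := hβ 0 h0flow
    rw [betaC] at this
    exact lt_of_lt_of_le (div_pos (by linarith [hρ0.2]) hint) this
  set C := α₁ * Mf + β₁ * Mj with hCdef
  have hC0 : 0 ≤ C := add_nonneg (mul_nonneg hα₁pos.le hMf0) (mul_nonneg hβ₁pos.le hMj0)
  intro t ht z hz
  rcases eq_or_lt_of_le ht.1 with h0 | htpos
  · rw [← h0]
    simpa using hS₀le z hz
  -- t > 0 : argue by contradiction
  by_contra hcon
  push_neg at hcon
  set ε := (u z t - (S₀ + t * C)) / (2 * t) with hεdef
  have htC : S₀ + t * C < u z t := hcon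
  have hεpos : 0 < ε := div_pos (by linarith) (by linarith)
  have htmul : t * ε = (u z t - (S₀ + t * C)) / 2 := by
    rw [hεdef]
    field_simp
  have htε : S₀ + t * C + t * ε < u z t := by
    nlinarith [htmul, htC]
  -- maximize W on the compact set K
  set W : ℂ × ℝ → ℝ := fun p => u p.1 p.2 - (C + ε) * p.2 with hWdef
  set K : Set (ℂ × ℝ) := cdisc ×ˢ Icc 0 t with hKdef
  have hKcomp : IsCompact K := hcds.prod isCompact_Icc
  have hKsub : K ⊆ cdisc ×ˢ flowDom T := Set.prod_mono_right (hIccsub t ht)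
  have hWc : ContinuousOn W K :=
    (hucont.mono hKsub).sub ((continuous_const.mul continuous_snd).continuousOn)
  have hztK : (z, t) ∈ K := Set.mk_mem_prod hz ⟨le_of_lt htpos, le_refl t⟩
  obtain ⟨⟨z₀, s⟩, hpK, hmaxW⟩ := hKcomp.exists_isMaxOn ⟨(z, t), hztK⟩ hWc
  have hz₀ : z₀ ∈ cdisc := hpK.1
  have hsI : s ∈ Icc (0:ℝ) t := hpK.2
  have hWzt : S₀ < W (z, t) := by
    simp only [hWdef]
    linarith
  have hWmax : S₀ < W (z₀, s) := lt_of_lt_of_le hWzt (isMaxOn_iff.mp hmaxW _ hztK)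
  have hspos : 0 < s := by
    rcases eq_or_lt_of_le hsI.1 with h | h
    · exfalso
      have : W (z₀, s) = u z₀ 0 := by rw [← h]; simp [hWdef]
      rw [this] at hWmax
      exact absurd (hS₀le z₀ hz₀) (not_le.mpr hWmax)
    · exact h
  have hsflow : s ∈ flowDom T := hIccsub t ht hsI
  -- time direction
  have hnhds_s : flowDom T ∈ 𝓝 s := by
    obtain ⟨r, hr0, hr1, hr2⟩ := ENNReal.lt_iff_exists_real_btwn.mp ht.2
    have htr : t < r := (ENNReal.ofReal_lt_ofReal_iff_of_nonneg ht.1).mp hr1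
    have hsub : Ioo (0:ℝ) r ⊆ flowDom T := by
      intro τ hτ
      refine ⟨hτ.1.le, lt_of_lt_of_le ?_ hr2.le⟩
      exact (ENNReal.ofReal_lt_ofReal_iff (lt_trans htpos htr)).mpr hτ.2
    exact Filter.mem_of_superset (isOpen_Ioo.mem_nhds ⟨hspos, lt_of_le_of_lt hsI.2 htr⟩) hsub
  have hdiff_t : DifferentiableAt ℝ (u z₀) s := by
    have hjoint : DifferentiableWithinAt ℝ (fun p : ℂ × ℝ => u p.1 p.2)
        (cdisc ×ˢ flowDom T) (z₀, s) :=
      (hsm.differentiableOn (by simp)) _ ⟨hz₀, hsflow⟩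
    have hγ : DifferentiableAt ℝ (fun τ : ℝ => ((z₀ : ℂ), τ)) s :=
      (differentiableAt_const _).prodMk differentiableAt_id
    have hcomp : DifferentiableWithinAt ℝ (fun τ => u z₀ τ) (flowDom T) s :=
      hjoint.comp s hγ.differentiableWithinAt (fun τ hτ => ⟨hz₀, hτ⟩)
    exact hcomp.differentiableAt hnhds_s
  have hd_ge : C + ε ≤ deriv (u z₀) s := by
    have hh : HasDerivAt (fun τ => u z₀ τ - (C + ε) * τ) (deriv (u z₀) s - (C + ε)) s := by
      have h1 : HasDerivAt (fun τ : ℝ => (C + ε) * τ) (C + ε) s := by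
        simpa using (hasDerivAt_id s).const_mul (C + ε)
      exact hdiff_t.hasDerivAt.sub h1
    have hmaxh : IsMaxOn (fun τ => u z₀ τ - (C + ε) * τ) (Icc 0 t) s := by
      intro τ hτ
      have := isMaxOn_iff.mp hmaxW (z₀, τ) (Set.mk_mem_prod hz₀ hτ)
      simpa [hWdef] using this
    have hcone : -s ∈ posTangentConeAt (Icc (0:ℝ) t) s := by
      have := sub_mem_posTangentConeAt_of_segment_subset
        ((convex_Icc (0:ℝ) t).segment_subset hsI ⟨le_refl 0, htpos.le⟩)
      simpa using this
    have hfd := hmaxh.localize.hasFDerivWithinAt_nonpos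
      hh.hasFDerivAt.hasFDerivWithinAt hcone
    simp only [ContinuousLinearMap.toSpanSingleton_apply,
      smul_eq_mul] at hfd
    nlinarith
  -- spatial maximum
  have hvmax : IsMaxOn (fun w => u w s) cdisc z₀ := by
    intro y hy
    have := isMaxOn_iff.mp hmaxW (y, s) (Set.mk_mem_prod hy hsI)
    simp only [hWdef] at this
    simpa using by linarith
  have hz₀norm : dist z₀ 0 ≤ 1 := mem_closedBall.mp hz₀
  rcases lt_or_eq_of_le hz₀norm with hlt | heq
  · -- interior case
    have hz₀o : z₀ ∈ odisc := mem_ball.mpr hlt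
    have hpde := hPDEi s hsflow hspos z₀ hz₀o
    have hlap : lapW (fun w => u w s) z₀ ≤ 0 :=
      lapW_nonpos (huC_cdisc s hsflow) hz₀o hvmax
    have h1 : alphaC f u ρ s * f z₀ ≤ α₁ * Mf :=
      calc alphaC f u ρ s * f z₀ ≤ α₁ * f z₀ :=
            mul_le_mul_of_nonneg_right (hα s hsflow) (hfpos z₀ hz₀).le
        _ ≤ α₁ * Mf :=
            mul_le_mul_of_nonneg_left ((le_abs_self _).trans (hMfle z₀ hz₀)) hα₁pos.le
    have h2 : Real.exp (-(2 * u z₀ s)) * lapW (fun w => u w s) z₀ ≤ 0 :=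
      mul_nonpos_of_nonneg_of_nonpos (Real.exp_pos _).le hlap
    have hd_le : deriv (u z₀) s ≤ C := by
      rw [hpde]
      have : 0 ≤ β₁ * Mj := mul_nonneg hβ₁pos.le hMj0
      linarith
    linarith
  · -- boundary case
    have hz₀b : z₀ ∈ bdry := by
      simp only [bdry, mem_sphere]
      exact heq
    have hpde := hPDEb s hsflow hspos z₀ hz₀b
    have hnder : 0 ≤ nder (fun w => u w s) z₀ := by
      have hcone : -z₀ ∈ posTangentConeAt cdisc z₀ := by
        have := sub_mem_posTangentConeAt_of_segment_subset
          ((convex_closedBall (0:ℂ) 1).segment_subset hz₀ h0c)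
        simpa [cdisc] using this
      have hfd := hvmax.localize.fderivWithin_nonpos hcone
      rw [map_neg] at hfd
      unfold nder
      linarith
    have h2 : 0 < Real.exp (-(u z₀ s)) * (nder (fun w => u w s) z₀ + 1) := by
      apply mul_pos (Real.exp_pos _)
      linarith
    have h1 : betaC j u ρ s * j z₀ ≤ β₁ * Mj :=
      calc betaC j u ρ s * j z₀ ≤ β₁ * j z₀ :=
            mul_le_mul_of_nonneg_right (hβ s hsflow) (hjpos z₀ hz₀b).le
        _ ≤ β₁ * Mj :=
            mul_le_mul_of_nonneg_left ((le_abs_self _).trans (hMjle z₀ hz₀b)) hβ₁pos.le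
    have hd_le : deriv (u z₀) s ≤ C := by
      rw [hpde]
      have : 0 ≤ α₁ * Mf := mul_nonneg hα₁pos.le hMf0
      linarith
    linarith

end
end

section
/- Let (u, ρ) be a smooth solution of the prescribed curvature flow on [0, T) for smooth positive data f (on the closed unit disc) and j (on the unit circle). Then the total quantity m(t) = ½∫_B e^{2u(·,t)} dz + ∫_{∂B} e^{u(·,t)} ds₀ is constant in t; that is, dm/dt = 0 for all 0 < t < T. -/
open MeasureTheory Metric Set Filter
open scoped Real Topology ENNReal

noncomputable section

namespace FlowConservedAux

lemma odisc_subset : odisc ⊆ cdisc := ball_subset_closedBall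
lemma bdry_subset : bdry ⊆ cdisc := sphere_subset_closedBall
lemma isOpen_odisc : IsOpen odisc := isOpen_ball
lemma measurableSet_odisc : MeasurableSet odisc := measurableSet_ball
lemma isCompact_cdisc : IsCompact cdisc := isCompact_closedBall _ _
lemma uniqueDiffOn_cdisc : UniqueDiffOn ℝ cdisc :=
  uniqueDiffOn_convex (convex_closedBall _ _)
    (by rw [cdisc, interior_closedBall (0:ℂ) one_ne_zero]; exact ⟨0, mem_ball_self one_pos⟩)
lemma cdisc_mem_nhds {z : ℂ} (hz : z ∈ odisc) : cdisc ∈ 𝓝 z :=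
  Filter.mem_of_superset (isOpen_odisc.mem_nhds hz) odisc_subset

lemma abs_bpt (θ : ℝ) : ‖bpt θ‖ = 1 := by
  simp [bpt, Complex.norm_exp_ofReal_mul_I]

lemma bpt_mem_bdry (θ : ℝ) : bpt θ ∈ bdry := by
  simp [bdry, mem_sphere_zero_iff_norm, abs_bpt]

lemma bpt_mem_cdisc (θ : ℝ) : bpt θ ∈ cdisc := bdry_subset (bpt_mem_bdry θ)

lemma continuous_bpt : Continuous bpt :=
  Complex.continuous_exp.comp (Complex.continuous_ofReal.mul continuous_const)

lemma smul_bpt_mem_cdisc {r : ℝ} (h : |r| ≤ 1) (θ : ℝ) : (r : ℂ) * bpt θ ∈ cdisc := by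
  simp only [cdisc, mem_closedBall_zero_iff, norm_mul,
    Complex.norm_real, Real.norm_eq_abs, abs_bpt, mul_one]
  exact h

lemma smul_bpt_mem_odisc {r : ℝ} (h : |r| < 1) (θ : ℝ) : (r : ℂ) * bpt θ ∈ odisc := by
  simp only [odisc, mem_ball_zero_iff, norm_mul,
    Complex.norm_real, Real.norm_eq_abs, abs_bpt, mul_one]
  exact h

lemma bpt_periodic : Function.Periodic bpt (2 * Real.pi) := by
  intro θ
  simp only [bpt, Complex.ofReal_add, add_mul, Complex.exp_add, Complex.ofReal_mul,
    Complex.ofReal_ofNat]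
  rw [Complex.exp_two_pi_mul_I, mul_one]

lemma bpt_neg_pi : bpt (-Real.pi) = bpt Real.pi := by
  simp only [bpt, Complex.ofReal_neg, neg_mul, Complex.exp_neg, Complex.exp_pi_mul_I]
  norm_num

/-- The "within the closed disc" derivative of `w` as a function. -/
def Fd (w : ℂ → ℝ) : ℂ → ℂ →L[ℝ] ℝ := fderivWithin ℝ w cdisc

/-- The second "within the closed disc" derivative of `w`. -/
def Hd (w : ℂ → ℝ) : ℂ → ℂ →L[ℝ] ℂ →L[ℝ] ℝ := fderivWithin ℝ (Fd w) cdisc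

section Green

variable {w : ℂ → ℝ} (hw : ContDiffOn ℝ (⊤ : ℕ∞) w cdisc)
include hw

lemma contDiffOn_Fd : ContDiffOn ℝ 1 (Fd w) cdisc :=
  (hw.of_le (by norm_cast) : ContDiffOn ℝ 2 w cdisc).fderivWithin uniqueDiffOn_cdisc (by norm_num)

lemma continuousOn_Fd : ContinuousOn (Fd w) cdisc := (contDiffOn_Fd hw).continuousOn

lemma continuousOn_Hd : ContinuousOn (Hd w) cdisc :=
  (contDiffOn_Fd hw).continuousOn_fderivWithin uniqueDiffOn_cdisc le_rfl

lemma hasFDerivAt_Fd {z : ℂ} (hz : z ∈ odisc) : HasFDerivAt (Fd w) (Hd w z) z :=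
  (((contDiffOn_Fd hw).differentiableOn one_ne_zero) z (odisc_subset hz)).hasFDerivWithinAt.hasFDerivAt
    (cdisc_mem_nhds hz)

lemma lap_eq {z : ℂ} (hz : z ∈ cdisc) :
    lapW w z = Hd w z 1 1 + Hd w z Complex.I Complex.I := by
  have hud := uniqueDiffOn_cdisc z hz
  have hdF : DifferentiableWithinAt ℝ (Fd w) cdisc z :=
    ((contDiffOn_Fd hw).differentiableOn one_ne_zero) z hz
  have h1 : fderivWithin ℝ (fun x => Fd w x 1) cdisc z =
      (Fd w z).comp (fderivWithin ℝ (fun _ => (1:ℂ)) cdisc z) + (Hd w z).flip 1 :=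
    fderivWithin_clm_apply hud hdF (differentiableWithinAt_const 1)
  have h2 : fderivWithin ℝ (fun x => Fd w x Complex.I) cdisc z =
      (Fd w z).comp (fderivWithin ℝ (fun _ => Complex.I) cdisc z) + (Hd w z).flip Complex.I :=
    fderivWithin_clm_apply hud hdF (differentiableWithinAt_const Complex.I)
  have e1 : fderivWithin ℝ (fun _ => (1:ℂ)) cdisc z = 0 := fderivWithin_const_apply _
  have e2 : fderivWithin ℝ (fun _ => Complex.I) cdisc z = 0 := fderivWithin_const_apply _
  show fderivWithin ℝ (fun x => Fd w x 1) cdisc z 1 +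
      fderivWithin ℝ (fun x => Fd w x Complex.I) cdisc z Complex.I = _
  rw [h1, h2, e1, e2]
  simp [ContinuousLinearMap.flip_apply]

omit hw

lemma rot (H : ℂ →L[ℝ] ℂ →L[ℝ] ℝ) (θ : ℝ) :
    H (bpt θ) (bpt θ) + H (Complex.I * bpt θ) (Complex.I * bpt θ) =
      H 1 1 + H Complex.I Complex.I := by
  have hc : bpt θ = Real.cos θ • (1:ℂ) + Real.sin θ • Complex.I := by
    simp only [bpt, Complex.exp_mul_I, Complex.real_smul, smul_eq_mul, mul_one,
      ← Complex.ofReal_cos, ← Complex.ofReal_sin]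
  have hic : Complex.I * bpt θ = (-Real.sin θ) • (1:ℂ) + Real.cos θ • Complex.I := by
    rw [hc]
    simp only [Complex.real_smul, mul_one, Complex.ofReal_neg]
    linear_combination (Real.sin θ : ℂ) * Complex.I_sq
  rw [hic, hc]
  simp only [map_add, _root_.map_smul, ContinuousLinearMap.add_apply, ContinuousLinearMap.smul_apply,
    smul_eq_mul]
  linear_combination (H 1 1 + H Complex.I Complex.I) * Real.sin_sq_add_cos_sq θ

include hw


lemma continuousOn_nder : ContinuousOn (fun z => nder w z) cdisc :=
  (continuousOn_Fd hw).clm_apply continuousOn_id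

lemma continuousOn_lapW : ContinuousOn (lapW w) cdisc :=
  ContinuousOn.congr
    ((((continuousOn_Hd hw).clm_apply continuousOn_const).clm_apply continuousOn_const).add
      (((continuousOn_Hd hw).clm_apply continuousOn_const).clm_apply continuousOn_const))
    (fun z hz => lap_eq hw hz)

theorem green : ∫ z in odisc, lapW w z = ∫ θ in (0:ℝ)..(2 * Real.pi), nder w (bpt θ) := by
  have hFc := continuousOn_Fd hw
  have hHc := continuousOn_Hd hw
  set ψ : ℝ × ℝ → ℂ := fun p => (p.1 : ℂ) * bpt p.2 with hψ
  have hψsymm : ∀ p : ℝ × ℝ, Complex.polarCoord.symm p = ψ p := by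
    intro p
    rw [Complex.polarCoord_symm_apply]
    simp only [hψ, bpt, Complex.exp_mul_I, ← Complex.ofReal_cos, ← Complex.ofReal_sin]
  have hψcont : Continuous ψ :=
    (Complex.continuous_ofReal.comp continuous_fst).mul (continuous_bpt.comp continuous_snd)
  set R : Set (ℝ × ℝ) := Ioo (0:ℝ) 1 ×ˢ Ioo (-Real.pi) Real.pi with hR
  have hRmeas : MeasurableSet R := by rw [hR]; exact (measurableSet_Ioo.prod measurableSet_Ioo)
  set A1 : ℝ × ℝ → ℝ :=
    fun p => Fd w (ψ p) (bpt p.2) + p.1 * Hd w (ψ p) (bpt p.2) (bpt p.2) with hA1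
  set A2 : ℝ × ℝ → ℝ :=
    fun p => p.1 * Hd w (ψ p) (Complex.I * bpt p.2) (Complex.I * bpt p.2) -
      Fd w (ψ p) (bpt p.2) with hA2
  have hmemIcc : ∀ p : ℝ × ℝ, p ∈ Icc (0:ℝ) 1 ×ˢ (univ : Set ℝ) → ψ p ∈ cdisc := fun p hp =>
    smul_bpt_mem_cdisc (abs_le.mpr ⟨by linarith [hp.1.1], hp.1.2⟩) p.2
  have hψconts : ContinuousOn (fun p : ℝ × ℝ => Fd w (ψ p)) (Icc (0:ℝ) 1 ×ˢ (univ : Set ℝ)) :=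
    hFc.comp hψcont.continuousOn hmemIcc
  have hψcontH : ContinuousOn (fun p : ℝ × ℝ => Hd w (ψ p)) (Icc (0:ℝ) 1 ×ˢ (univ : Set ℝ)) :=
    hHc.comp hψcont.continuousOn hmemIcc
  have hbpt2 : Continuous (fun p : ℝ × ℝ => bpt p.2) := continuous_bpt.comp continuous_snd
  have hA1cont : ContinuousOn A1 (Icc (0:ℝ) 1 ×ˢ (univ : Set ℝ)) :=
    (hψconts.clm_apply hbpt2.continuousOn).add
      (continuous_fst.continuousOn.mul
        ((hψcontH.clm_apply hbpt2.continuousOn).clm_apply hbpt2.continuousOn))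
  have hA2cont : ContinuousOn A2 (Icc (0:ℝ) 1 ×ˢ (univ : Set ℝ)) :=
    (continuous_fst.continuousOn.mul
      ((hψcontH.clm_apply (continuous_const.mul hbpt2).continuousOn).clm_apply
        (continuous_const.mul hbpt2).continuousOn)).sub
      (hψconts.clm_apply hbpt2.continuousOn)
  have hRsub : R ⊆ Icc (0:ℝ) 1 ×ˢ (univ : Set ℝ) := by
    rw [hR]; exact prod_mono Ioo_subset_Icc_self (subset_univ _)
  have hRsub' : R ⊆ Icc (0:ℝ) 1 ×ˢ Icc (-Real.pi) Real.pi := by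
    rw [hR]; exact prod_mono Ioo_subset_Icc_self Ioo_subset_Icc_self
  have hsubIcc : Icc (0:ℝ) 1 ×ˢ Icc (-Real.pi) Real.pi ⊆ Icc (0:ℝ) 1 ×ˢ (univ : Set ℝ) :=
    prod_mono subset_rfl (subset_univ _)
  have hA1intR : IntegrableOn A1 R :=
    (((hA1cont.mono hsubIcc).integrableOn_compact (isCompact_Icc.prod isCompact_Icc)).mono_set
      hRsub')
  have hA2intR : IntegrableOn A2 R :=
    (((hA2cont.mono hsubIcc).integrableOn_compact (isCompact_Icc.prod isCompact_Icc)).mono_set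
      hRsub')
  -- Step 1 : polar coordinates
  have step1 : ∫ z in odisc, lapW w z = ∫ p in R, p.1 * lapW w (ψ p) := by
    have h0 : ∫ z in odisc, lapW w z = ∫ z, Set.indicator odisc (lapW w) z :=
      (integral_indicator measurableSet_odisc).symm
    rw [h0, ← Complex.integral_comp_polarCoord_symm]
    have h1 : ∀ p ∈ polarCoord.target,
        p.1 • Set.indicator odisc (lapW w) (Complex.polarCoord.symm p) =
          Set.indicator {q : ℝ × ℝ | q.1 < 1} (fun q => q.1 * lapW w (ψ q)) p := by
      intro p hp
      rw [polarCoord_target] at hp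
      have hp1 : (0:ℝ) < p.1 := hp.1
      rw [hψsymm p]
      have hmem : ψ p ∈ odisc ↔ p.1 < 1 := by
        rw [odisc, mem_ball_zero_iff]
        simp only [hψ, norm_mul, Complex.norm_real, Real.norm_eq_abs, abs_bpt, mul_one]
        rw [abs_of_pos hp1]
      by_cases h : p.1 < 1
      · rw [Set.indicator_of_mem (hmem.mpr h), Set.indicator_of_mem (by exact h)]
        exact smul_eq_mul ..
      · rw [Set.indicator_of_notMem (fun hh => h (hmem.mp hh)),
          Set.indicator_of_notMem (by exact h), smul_zero]
    rw [setIntegral_congr_fun polarCoord.open_target.measurableSet h1,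
      setIntegral_indicator (measurableSet_lt measurable_fst measurable_const)]
    have hset : polarCoord.target ∩ {q : ℝ × ℝ | q.1 < 1} = R := by
      rw [polarCoord_target, hR]
      ext q
      simp only [mem_inter_iff, mem_prod, mem_Ioi, mem_Ioo, mem_setOf_eq]
      tauto
    rw [hset]
  -- Step 2 : pointwise splitting
  have step2 : ∀ p ∈ R, p.1 * lapW w (ψ p) = A1 p + A2 p := by
    intro p hp
    have hmem : ψ p ∈ cdisc := hmemIcc p (hRsub hp)
    rw [lap_eq hw hmem, ← rot (Hd w (ψ p)) p.2]
    simp only [hA1, hA2]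
    ring
  -- radial derivative
  have hA1deriv : ∀ (θ : ℝ), ∀ r ∈ Ioo (0:ℝ) 1,
      HasDerivAt (fun r' : ℝ => r' * Fd w ((r':ℂ) * bpt θ) (bpt θ)) (A1 (r, θ)) r := by
    intro θ r hr
    have hz : (r:ℂ) * bpt θ ∈ odisc :=
      smul_bpt_mem_odisc (by rw [abs_of_pos hr.1]; exact hr.2) θ
    have hγ : HasDerivAt (fun r' : ℝ => ((r':ℂ)) * bpt θ) (bpt θ) r := by
      simpa using (Complex.ofRealCLM.hasDerivAt (x := r)).mul_const (bpt θ)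
    have hc : HasDerivAt (fun r' : ℝ => Fd w ((r':ℂ) * bpt θ))
        (Hd w ((r:ℂ) * bpt θ) (bpt θ)) r := (hasFDerivAt_Fd hw hz).comp_hasDerivAt r hγ
    have happ : HasDerivAt (fun r' : ℝ => Fd w ((r':ℂ) * bpt θ) (bpt θ))
        (Hd w ((r:ℂ) * bpt θ) (bpt θ) (bpt θ)) r := by
      simpa using hc.clm_apply (hasDerivAt_const r (bpt θ))
    have := (hasDerivAt_id r).mul happ
    simpa [hA1, hψ, Pi.mul_def] using this
  -- angular derivative
  have hA2deriv : ∀ r ∈ Ioo (0:ℝ) 1, ∀ θ : ℝ,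
      HasDerivAt (fun θ' : ℝ => Fd w ((r:ℂ) * bpt θ') (Complex.I * bpt θ'))
        (A2 (r, θ)) θ := by
    intro r hr θ
    have hz : (r:ℂ) * bpt θ ∈ odisc :=
      smul_bpt_mem_odisc (by rw [abs_of_pos hr.1]; exact hr.2) θ
    have hb : HasDerivAt bpt (bpt θ * Complex.I) θ := by
      have h1 : HasDerivAt (fun θ' : ℝ => (θ' : ℂ) * Complex.I) Complex.I θ := by
        simpa using (Complex.ofRealCLM.hasDerivAt (x := θ)).mul_const Complex.I
      exact h1.cexp
    have hγ : HasDerivAt (fun θ' : ℝ => (r:ℂ) * bpt θ') ((r:ℂ) * (bpt θ * Complex.I)) θ :=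
      hb.const_mul _
    have hc : HasDerivAt (fun θ' : ℝ => Fd w ((r:ℂ) * bpt θ'))
        (Hd w ((r:ℂ) * bpt θ) ((r:ℂ) * (bpt θ * Complex.I))) θ :=
      (hasFDerivAt_Fd hw hz).comp_hasDerivAt θ hγ
    have hv : HasDerivAt (fun θ' : ℝ => Complex.I * bpt θ') (Complex.I * (bpt θ * Complex.I)) θ :=
      hb.const_mul _
    have hall := hc.clm_apply hv
    have e1 : (Complex.I : ℂ) * (bpt θ * Complex.I) = -bpt θ := by
      linear_combination (bpt θ) * Complex.I_sq
    have e2 : ((r:ℂ)) * (bpt θ * Complex.I) = r • (Complex.I * bpt θ) := by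
      rw [Complex.real_smul]; ring
    rw [e1, e2, _root_.map_smul, map_neg] at hall
    simpa [hA2, hψ, ContinuousLinearMap.smul_apply, smul_eq_mul, sub_eq_add_neg] using hall
  -- inner radial integral
  have hA1inner : ∀ θ : ℝ, ∫ r in Ioo (0:ℝ) 1, A1 (r, θ) = nder w (bpt θ) := by
    intro θ
    have hin : ∀ r' : ℝ, r' ∈ Icc (0:ℝ) 1 → ((r':ℂ)) * bpt θ ∈ cdisc := fun r' hr' =>
      smul_bpt_mem_cdisc (abs_le.mpr ⟨by linarith [hr'.1], hr'.2⟩) θ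
    have hcont : ContinuousOn (fun r' : ℝ => r' * Fd w ((r':ℂ) * bpt θ) (bpt θ)) (Icc 0 1) :=
      continuousOn_id.mul
        ((hFc.comp ((Complex.continuous_ofReal.mul continuous_const).continuousOn) hin).clm_apply
          continuousOn_const)
    have hint : IntervalIntegrable (fun r => A1 (r, θ)) volume 0 1 := by
      apply ContinuousOn.intervalIntegrable
      rw [uIcc_of_le zero_le_one]
      exact hA1cont.comp (Continuous.continuousOn (continuous_id.prodMk continuous_const))
        (fun r hr => ⟨hr, trivial⟩)
    rw [← integral_Ioc_eq_integral_Ioo, ← intervalIntegral.integral_of_le zero_le_one,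
      intervalIntegral.integral_eq_sub_of_hasDerivAt_of_le zero_le_one hcont
        (fun r hr => hA1deriv θ r hr) hint]
    simp [nder, Fd]
  -- inner angular integral
  have hA2inner : ∀ r ∈ Ioo (0:ℝ) 1, ∫ θ in Ioo (-Real.pi) Real.pi, A2 (r, θ) = 0 := by
    intro r hr
    have hle : -Real.pi ≤ Real.pi := by linarith [Real.pi_pos]
    have hQcont : ContinuousOn (fun θ' : ℝ => Fd w ((r:ℂ) * bpt θ') (Complex.I * bpt θ'))
        (Icc (-Real.pi) Real.pi) := by
      have hmc : Continuous fun θ' : ℝ => (r:ℂ) * bpt θ' := continuous_const.mul continuous_bpt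
      exact (hFc.comp hmc.continuousOn
        (fun θ' _ => smul_bpt_mem_cdisc (by rw [abs_of_pos hr.1]; exact hr.2.le) θ')).clm_apply
        (continuous_const.mul continuous_bpt).continuousOn
    have hint : IntervalIntegrable (fun θ => A2 (r, θ)) volume (-Real.pi) Real.pi := by
      apply ContinuousOn.intervalIntegrable
      exact hA2cont.comp (Continuous.continuousOn (continuous_const.prodMk continuous_id))
        (fun θ _ => ⟨⟨hr.1.le, hr.2.le⟩, trivial⟩)
    rw [← integral_Ioc_eq_integral_Ioo, ← intervalIntegral.integral_of_le hle,
      intervalIntegral.integral_eq_sub_of_hasDerivAt_of_le hle hQcont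
        (fun θ _ => hA2deriv r hr θ) hint, bpt_neg_pi, sub_self]
  -- Fubini for A2
  have hA2zero : ∫ p in R, A2 p = 0 := by
    rw [hR, Measure.volume_eq_prod] at hA2intR ⊢
    rw [setIntegral_prod _ hA2intR]
    rw [setIntegral_congr_fun measurableSet_Ioo (fun r hr => hA2inner r hr)]
    simp
  -- Fubini for A1
  have hA1val : ∫ p in R, A1 p = ∫ θ in Ioo (-Real.pi) Real.pi, nder w (bpt θ) := by
    rw [hR, Measure.volume_eq_prod] at hA1intR ⊢
    have hswap : Integrable A1 ((volume.restrict (Ioo (0:ℝ) 1)).prod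
        (volume.restrict (Ioo (-Real.pi) Real.pi))) := by
      rw [Measure.prod_restrict]; exact hA1intR
    rw [← Measure.prod_restrict]
    rw [MeasureTheory.integral_prod_symm _ hswap]
    exact setIntegral_congr_fun measurableSet_Ioo (fun θ _ => hA1inner θ)
  have hperiod : ∫ θ in (-Real.pi)..Real.pi, nder w (bpt θ) =
      ∫ θ in (0:ℝ)..(2 * Real.pi), nder w (bpt θ) := by
    have hper : Function.Periodic (fun θ => nder w (bpt θ)) (2 * Real.pi) := fun θ => by
      simp only [bpt_periodic θ]
    have h := hper.intervalIntegral_add_eq (-Real.pi) 0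
    rw [zero_add, show -Real.pi + 2 * Real.pi = Real.pi by ring] at h
    exact h
  calc ∫ z in odisc, lapW w z = ∫ p in R, p.1 * lapW w (ψ p) := step1
    _ = ∫ p in R, (A1 p + A2 p) := setIntegral_congr_fun hRmeas step2
    _ = (∫ p in R, A1 p) + ∫ p in R, A2 p := integral_add hA1intR hA2intR
    _ = ∫ θ in Ioo (-Real.pi) Real.pi, nder w (bpt θ) := by rw [hA1val, hA2zero, add_zero]
    _ = ∫ θ in (0:ℝ)..(2 * Real.pi), nder w (bpt θ) := by
        rw [← integral_Ioc_eq_integral_Ioo,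
          ← intervalIntegral.integral_of_le (by linarith [Real.pi_pos] : -Real.pi ≤ Real.pi)]
        exact hperiod

end Green

end FlowConservedAux

open FlowConservedAux

/-- Conservation of the total quantity `m(t) = ½∫_B e^{2u} dz + ∫_{∂B} e^{u} ds₀`
along the prescribed curvature flow. -/
theorem flow_volume_conserved (f j : ℂ → ℝ)
    (hf : ContDiffOn ℝ (⊤ : ℕ∞) f cdisc) (hfpos : ∀ z ∈ cdisc, 0 < f z)
    (hj : ContDiffOn ℝ (⊤ : ℕ∞) j bdry) (hjpos : ∀ z ∈ bdry, 0 < j z)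
    (T : ℝ≥0∞) (hT : 0 < T) (u : ℂ → ℝ → ℝ) (ρ : ℝ → ℝ)
    (hflow : IsFlow f j T u ρ) :
    ∀ t : ℝ, 0 < t → ENNReal.ofReal t < T →
      HasDerivAt
        (fun s => (1 / 2) * ballInt (fun z => Real.exp (2 * u z s)) +
          circInt (fun z => Real.exp (u z s)))
        0 t := by
  obtain ⟨hU, hρ, hρmem, hPDEi, hPDEb, hODE⟩ := hflow
  intro t₀ ht₀ htT
  have hπ := Real.pi_pos
  have hmeas := FlowConservedAux.measurableSet_odisc
  -- the open set of "good" times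
  have hΩopen : IsOpen (Ioi (0:ℝ) ∩ ENNReal.ofReal ⁻¹' (Iio T)) :=
    isOpen_Ioi.inter (isOpen_Iio.preimage ENNReal.continuous_ofReal)
  have hΩsub : (Ioi (0:ℝ) ∩ ENNReal.ofReal ⁻¹' (Iio T)) ⊆ flowDom T := fun s hs =>
    ⟨le_of_lt hs.1, hs.2⟩
  have ht₀Ω : t₀ ∈ Ioi (0:ℝ) ∩ ENNReal.ofReal ⁻¹' (Iio T) := ⟨ht₀, htT⟩
  have ht₀F : t₀ ∈ flowDom T := hΩsub ht₀Ω
  have hconv : Convex ℝ (flowDom T) := by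
    apply Set.OrdConnected.convex
    constructor
    intro x hx y hy z hz
    exact ⟨hx.1.trans hz.1, lt_of_le_of_lt (ENNReal.ofReal_le_ofReal hz.2) hy.2⟩
  have hFud : UniqueDiffOn ℝ (flowDom T) :=
    uniqueDiffOn_convex hconv ⟨t₀, (hΩopen.subset_interior_iff.2 hΩsub) ht₀Ω⟩
  have hSud : UniqueDiffOn ℝ (cdisc ×ˢ flowDom T) :=
    FlowConservedAux.uniqueDiffOn_cdisc.prod hFud
  set S : Set (ℂ × ℝ) := cdisc ×ˢ flowDom T with hS
  set ut : ℂ × ℝ → ℝ :=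
    fun p => fderivWithin ℝ (fun q : ℂ × ℝ => u q.1 q.2) S p ((0:ℂ), (1:ℝ)) with hut
  have hUc : ContinuousOn (fun p : ℂ × ℝ => u p.1 p.2) S := hU.continuousOn
  have hutc : ContinuousOn ut S :=
    (hU.continuousOn_fderivWithin hSud (by norm_cast)).clm_apply continuousOn_const
  have hAderiv : ∀ z ∈ cdisc, ∀ s ∈ Ioi (0:ℝ) ∩ ENNReal.ofReal ⁻¹' (Iio T),
      HasDerivAt (u z) (ut (z, s)) s := by
    intro z hz s hs
    have hdw : HasFDerivWithinAt (fun q : ℂ × ℝ => u q.1 q.2)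
        (fderivWithin ℝ (fun q : ℂ × ℝ => u q.1 q.2) S (z, s)) S (z, s) :=
      ((hU.differentiableOn (by norm_cast)) (z, s) ⟨hz, hΩsub hs⟩).hasFDerivWithinAt
    have hι : HasDerivWithinAt (fun s' : ℝ => ((z : ℂ), s')) ((0:ℂ), (1:ℝ)) (flowDom T) s :=
      ((hasDerivAt_const s z).prodMk (hasDerivAt_id s)).hasDerivWithinAt
    have hmap : MapsTo (fun s' : ℝ => ((z:ℂ), s')) (flowDom T) S := fun s' hs' => ⟨hz, hs'⟩
    have hcomp := hdw.comp_hasDerivWithinAt s hι hmap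
    exact hcomp.hasDerivAt (mem_of_superset (hΩopen.mem_nhds hs) hΩsub)
  obtain ⟨δ, hδpos, hδsub⟩ := Metric.isOpen_iff.1 hΩopen t₀ ht₀Ω
  have hballIcc : ball t₀ (δ/2) ⊆ Icc (t₀ - δ/2) (t₀ + δ/2) := by
    intro s hs
    rw [mem_ball, Real.dist_eq, abs_lt] at hs
    exact ⟨by linarith [hs.1], by linarith [hs.2]⟩
  have hIccsub : Icc (t₀ - δ/2) (t₀ + δ/2) ⊆ Ioi (0:ℝ) ∩ ENNReal.ofReal ⁻¹' (Iio T) := by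
    intro s hs
    apply hδsub
    rw [mem_ball, Real.dist_eq, abs_lt]
    exact ⟨by linarith [hs.1], by linarith [hs.2]⟩
  have hballΩ : ball t₀ (δ/2) ⊆ Ioi (0:ℝ) ∩ ENNReal.ofReal ⁻¹' (Iio T) :=
    hballIcc.trans hIccsub
  set K : Set (ℂ × ℝ) := cdisc ×ˢ Icc (t₀ - δ/2) (t₀ + δ/2) with hK
  have hKS : K ⊆ S := prod_mono subset_rfl (hIccsub.trans hΩsub)
  have hKcomp : IsCompact K := FlowConservedAux.isCompact_cdisc.prod isCompact_Icc
  obtain ⟨C₁, hC₁⟩ := hKcomp.exists_bound_of_continuousOn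
    (((continuousOn_const.mul hutc).mul
      (Real.continuous_exp.comp_continuousOn (continuousOn_const.mul hUc))).mono hKS)
  obtain ⟨C₂, hC₂⟩ := hKcomp.exists_bound_of_continuousOn
    ((hutc.mul (Real.continuous_exp.comp_continuousOn hUc)).mono hKS)
  have contz : ∀ s ∈ flowDom T, ContinuousOn (fun z => u z s) cdisc := fun s hs =>
    hUc.comp (Continuous.continuousOn (continuous_id.prodMk continuous_const))
      (fun z hz => ⟨hz, hs⟩)
  have contzt : ∀ s ∈ flowDom T, ContinuousOn (fun z => ut (z, s)) cdisc := fun s hs =>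
    hutc.comp (Continuous.continuousOn (continuous_id.prodMk continuous_const))
      (fun z hz => ⟨hz, hs⟩)
  -- derivative of the area integral
  have hD1 : HasDerivAt (fun s => ∫ z in odisc, Real.exp (2 * u z s))
      (∫ z in odisc, 2 * ut (z, t₀) * Real.exp (2 * u z t₀)) t₀ := by
    refine (hasDerivAt_integral_of_dominated_loc_of_deriv_le (μ := volume.restrict odisc)
      (F := fun s z => Real.exp (2 * u z s))
      (F' := fun s z => 2 * ut (z, s) * Real.exp (2 * u z s))
      (bound := fun _ => C₁) (ball_mem_nhds t₀ (half_pos hδpos)) ?_ ?_ ?_ ?_ ?_ ?_).2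
    · filter_upwards [hΩopen.mem_nhds ht₀Ω] with s hs
      exact ((Real.continuous_exp.comp_continuousOn
        (continuousOn_const.mul (contz s (hΩsub hs)))).mono
          FlowConservedAux.odisc_subset).aestronglyMeasurable hmeas
    · exact ((Real.continuous_exp.comp_continuousOn
        (continuousOn_const.mul (contz t₀ ht₀F))).integrableOn_compact
          FlowConservedAux.isCompact_cdisc).mono_set FlowConservedAux.odisc_subset
    · exact (((continuousOn_const.mul (contzt t₀ ht₀F)).mul
        (Real.continuous_exp.comp_continuousOn
          (continuousOn_const.mul (contz t₀ ht₀F)))).mono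
            FlowConservedAux.odisc_subset).aestronglyMeasurable hmeas
    · refine (ae_restrict_iff' hmeas).2 (ae_of_all _ ?_)
      intro z hz s hs
      exact hC₁ (z, s) ⟨FlowConservedAux.odisc_subset hz, hballIcc hs⟩
    · exact integrableOn_const measure_ball_lt_top.ne
    · refine (ae_restrict_iff' hmeas).2 (ae_of_all _ ?_)
      intro z hz s hs
      have hd := hAderiv z (FlowConservedAux.odisc_subset hz) s (hballΩ hs)
      simpa [mul_comm, mul_assoc, mul_left_comm] using (hd.const_mul (2:ℝ)).exp
  -- derivative of the boundary integral
  have hD2 : HasDerivAt (fun s => ∫ θ in (0:ℝ)..(2*Real.pi), Real.exp (u (bpt θ) s))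
      (∫ θ in (0:ℝ)..(2*Real.pi), ut (bpt θ, t₀) * Real.exp (u (bpt θ) t₀)) t₀ := by
    refine (intervalIntegral.hasDerivAt_integral_of_dominated_loc_of_deriv_le
      (F := fun s θ => Real.exp (u (bpt θ) s))
      (F' := fun s θ => ut (bpt θ, s) * Real.exp (u (bpt θ) s))
      (bound := fun _ => C₂) (ball_mem_nhds t₀ (half_pos hδpos)) ?_ ?_ ?_ ?_ ?_ ?_).2
    · filter_upwards [hΩopen.mem_nhds ht₀Ω] with s hs
      exact (Real.continuous_exp.comp ((contz s (hΩsub hs)).comp_continuous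
        FlowConservedAux.continuous_bpt FlowConservedAux.bpt_mem_cdisc)).aestronglyMeasurable
    · exact (Real.continuous_exp.comp ((contz t₀ ht₀F).comp_continuous
        FlowConservedAux.continuous_bpt FlowConservedAux.bpt_mem_cdisc)).intervalIntegrable _ _
    · exact (((contzt t₀ ht₀F).comp_continuous FlowConservedAux.continuous_bpt
        FlowConservedAux.bpt_mem_cdisc).mul (Real.continuous_exp.comp
          ((contz t₀ ht₀F).comp_continuous FlowConservedAux.continuous_bpt
            FlowConservedAux.bpt_mem_cdisc))).aestronglyMeasurable
    · refine ae_of_all _ ?_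
      intro θ _ s hs
      exact hC₂ (bpt θ, s) ⟨FlowConservedAux.bpt_mem_cdisc θ, hballIcc hs⟩
    · exact intervalIntegrable_const
    · refine ae_of_all _ ?_
      intro θ _ s hs
      have hd := hAderiv (bpt θ) (FlowConservedAux.bpt_mem_cdisc θ) s (hballΩ hs)
      simpa [mul_comm] using hd.exp
  have hcomb := (hD1.const_mul ((1:ℝ)/2)).add hD2
  -- the value computations
  have hd_eq : ∀ z ∈ cdisc, ut (z, t₀) = deriv (u z) t₀ := fun z hz =>
    ((hAderiv z hz t₀ ht₀Ω).deriv).symm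
  have hwsm : ContDiffOn ℝ (⊤:ℕ∞) (fun z => u z t₀) cdisc :=
    hU.comp ((contDiff_id.prodMk contDiff_const).contDiffOn) (fun z hz => ⟨hz, ht₀F⟩)
  have hcontu : ContinuousOn (fun z => Real.exp (2 * u z t₀)) cdisc :=
    Real.continuous_exp.comp_continuousOn (continuousOn_const.mul (contz t₀ ht₀F))
  have hfint : IntegrableOn (fun z => f z * Real.exp (2 * u z t₀)) odisc :=
    ((hf.continuousOn.mul hcontu).integrableOn_compact
      FlowConservedAux.isCompact_cdisc).mono_set FlowConservedAux.odisc_subset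
  have hlapint : IntegrableOn (lapW (fun z' => u z' t₀)) odisc :=
    ((FlowConservedAux.continuousOn_lapW hwsm).integrableOn_compact
      FlowConservedAux.isCompact_cdisc).mono_set FlowConservedAux.odisc_subset
  have hcontj : Continuous fun θ => j (bpt θ) :=
    hj.continuousOn.comp_continuous FlowConservedAux.continuous_bpt
      FlowConservedAux.bpt_mem_bdry
  have hconte : Continuous fun θ => Real.exp (u (bpt θ) t₀) :=
    Real.continuous_exp.comp ((contz t₀ ht₀F).comp_continuous
      FlowConservedAux.continuous_bpt FlowConservedAux.bpt_mem_cdisc)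
  have hcontn : Continuous fun θ => nder (fun z' => u z' t₀) (bpt θ) :=
    (FlowConservedAux.continuousOn_nder hwsm).comp_continuous
      FlowConservedAux.continuous_bpt FlowConservedAux.bpt_mem_cdisc
  have hb : 0 < ballInt (fun z => f z * Real.exp (2 * u z t₀)) := by
    rw [ballInt, setIntegral_pos_iff_support_of_nonneg_ae]
    · refine lt_of_lt_of_le (measure_ball_pos volume 0 one_pos) (measure_mono ?_)
      intro z hz
      exact ⟨ne_of_gt (mul_pos (hfpos z (FlowConservedAux.odisc_subset hz))
        (Real.exp_pos _)), hz⟩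
    · exact (ae_restrict_iff' hmeas).2 (ae_of_all _ fun z hz =>
        (mul_pos (hfpos z (FlowConservedAux.odisc_subset hz)) (Real.exp_pos _)).le)
    · exact hfint
  have hc : 0 < circInt (fun z => j z * Real.exp (u z t₀)) := by
    rw [circInt]
    apply intervalIntegral.intervalIntegral_pos_of_pos_on
    · exact (hcontj.mul hconte).intervalIntegrable _ _
    · intro θ _
      exact mul_pos (hjpos _ (FlowConservedAux.bpt_mem_bdry θ)) (Real.exp_pos _)
    · linarith
  have hD1val : ∫ z in odisc, 2 * ut (z, t₀) * Real.exp (2 * u z t₀) =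
      2 * alphaC f u ρ t₀ * ballInt (fun z => f z * Real.exp (2 * u z t₀)) +
        2 * ∫ z in odisc, lapW (fun z' => u z' t₀) z := by
    have hpt : ∀ z ∈ odisc, 2 * ut (z, t₀) * Real.exp (2 * u z t₀) =
        2 * alphaC f u ρ t₀ * (f z * Real.exp (2 * u z t₀)) +
          2 * lapW (fun z' => u z' t₀) z := by
      intro z hz
      rw [hd_eq z (FlowConservedAux.odisc_subset hz), hPDEi t₀ ht₀F ht₀ z hz]
      have h1 : Real.exp (-(2 * u z t₀)) * Real.exp (2 * u z t₀) = 1 := by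
        rw [← Real.exp_add]; simp
      linear_combination (2 * lapW (fun z' => u z' t₀) z) * h1
    rw [setIntegral_congr_fun hmeas hpt,
      integral_add (hfint.const_mul _) (hlapint.const_mul _),
      integral_const_mul, integral_const_mul]
    rfl
  have hD2val : ∫ θ in (0:ℝ)..(2*Real.pi), ut (bpt θ, t₀) * Real.exp (u (bpt θ) t₀) =
      betaC j u ρ t₀ * circInt (fun z => j z * Real.exp (u z t₀)) -
        (∫ θ in (0:ℝ)..(2*Real.pi), nder (fun z' => u z' t₀) (bpt θ)) - 2 * Real.pi := by
    have hpt : ∀ θ : ℝ, ut (bpt θ, t₀) * Real.exp (u (bpt θ) t₀) =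
        betaC j u ρ t₀ * (j (bpt θ) * Real.exp (u (bpt θ) t₀)) -
          (nder (fun z' => u z' t₀) (bpt θ) + 1) := by
      intro θ
      rw [hd_eq (bpt θ) (FlowConservedAux.bpt_mem_cdisc θ),
        hPDEb t₀ ht₀F ht₀ (bpt θ) (FlowConservedAux.bpt_mem_bdry θ)]
      have h1 : Real.exp (-(u (bpt θ) t₀)) * Real.exp (u (bpt θ) t₀) = 1 := by
        rw [← Real.exp_add]; simp
      linear_combination (-(nder (fun z' => u z' t₀) (bpt θ) + 1)) * h1
    rw [intervalIntegral.integral_congr (fun θ _ => hpt θ),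
      intervalIntegral.integral_sub
        (f := fun θ => betaC j u ρ t₀ * (j (bpt θ) * Real.exp (u (bpt θ) t₀)))
        (g := fun θ => nder (fun z' => u z' t₀) (bpt θ) + 1)
        ((continuous_const.mul (hcontj.mul hconte)).intervalIntegrable _ _)
        ((hcontn.add continuous_const).intervalIntegrable _ _),
      intervalIntegral.integral_const_mul,
      intervalIntegral.integral_add (hcontn.intervalIntegrable _ _) intervalIntegrable_const,
      intervalIntegral.integral_const]
    simp only [circInt, smul_eq_mul]
    ring
  have hαb : alphaC f u ρ t₀ * ballInt (fun z => f z * Real.exp (2 * u z t₀)) = 2 * ρ t₀ := by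
    unfold alphaC
    exact div_mul_cancel₀ _ (ne_of_gt hb)
  have hβc : betaC j u ρ t₀ * circInt (fun z => j z * Real.exp (u z t₀)) =
      2 * (Real.pi - ρ t₀) := by
    unfold betaC
    exact div_mul_cancel₀ _ (ne_of_gt hc)
  have hgreen : ∫ z in odisc, lapW (fun z' => u z' t₀) z =
      ∫ θ in (0:ℝ)..(2*Real.pi), nder (fun z' => u z' t₀) (bpt θ) :=
    FlowConservedAux.green hwsm
  simp only [ballInt, circInt]
  refine hcomb.congr_deriv (Eq.symm ?_)
  rw [hD1val, hD2val, ← hgreen]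
  linear_combination -hαb - hβc
end
end
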